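/- If A ∈ M_n(ℝ) has a real eigenvalue of algebraic multiplicity 1, then there exists an invertible real matrix C such that the unital algebra generated by C^{-1}AC is generated by a single entrywise strictly positive matrix; i.e., there exists a strictly positive matrix B with ⟨B⟩ = C^{-1}⟨A⟩C. -/

import Mathlib

open Matrix Polynomial


namespace Stmt6Aux

variable {n : ℕ}

lemma vmv_mul_vmv (u z w v : Fin n → ℝ) :
    vecMulVec u z * vecMulVec w v = (z ⬝ᵥ w) • vecMulVec u v := by
  ext i j
  simp only [mul_apply, vecMulVec_apply, Matrix.smul_apply, dotProduct, smul_eq_mul, Finset.sum_mul]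
  exact Finset.sum_congr rfl fun k _ => by ring

lemma mul_vmv (M : Matrix (Fin n) (Fin n) ℝ) (w v : Fin n → ℝ) :
    M * vecMulVec w v = vecMulVec (M *ᵥ w) v := by
  ext i j
  simp only [mul_apply, vecMulVec_apply, mulVec, dotProduct, Finset.sum_mul]
  exact Finset.sum_congr rfl fun k _ => by ring

lemma vmv_mul (u z : Fin n → ℝ) (M : Matrix (Fin n) (Fin n) ℝ) :
    vecMulVec u z * M = vecMulVec u (z ᵥ* M) := by
  ext i j
  simp only [mul_apply, vecMulVec_apply, vecMul, dotProduct, Finset.mul_sum]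
  exact Finset.sum_congr rfl fun k _ => by ring

lemma conj_inv (u v w z : Fin n → ℝ) (M M' : Matrix (Fin n) (Fin n) ℝ)
    (hvu : v ⬝ᵥ u = 1) (hzw : z ⬝ᵥ w = 1) (hMw : M *ᵥ w = u) (hMM' : M * M' = 1) :
    (vecMulVec u z + (1 - vecMulVec u v) * M * (1 - vecMulVec w z)) *
      (vecMulVec w v + (1 - vecMulVec w z) * M' * (1 - vecMulVec u v)) = 1 := by
  set E := 1 - vecMulVec u v with hE
  set F := 1 - vecMulVec w z with hF
  have hEu : ∀ y : Fin n → ℝ, E * vecMulVec u y = 0 := by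
    intro y
    rw [hE, sub_mul, one_mul, vmv_mul_vmv, hvu, one_smul, sub_self]
  have hzF : ∀ y : Fin n → ℝ, vecMulVec y z * F = 0 := by
    intro y
    rw [hF, mul_sub, mul_one, vmv_mul_vmv, hzw, one_smul, sub_self]
  have hFv : ∀ y : Fin n → ℝ, F * vecMulVec w y = 0 := by
    intro y
    rw [hF, sub_mul, one_mul, vmv_mul_vmv, hzw, one_smul, sub_self]
  have hEE : E * E = E := by
    nth_rewrite 2 [hE]
    rw [mul_sub, mul_one, hEu, sub_zero]
  have hFF : F * F = F := by
    nth_rewrite 2 [hF]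
    rw [mul_sub, mul_one, hFv, sub_zero]
  have t11 : vecMulVec u z * vecMulVec w v = vecMulVec u v := by
    rw [vmv_mul_vmv, hzw, one_smul]
  have t12 : vecMulVec u z * (F * M' * E) = 0 := by
    rw [← mul_assoc, ← mul_assoc, hzF, zero_mul, zero_mul]
  have t21 : E * M * F * vecMulVec w v = 0 := by
    rw [mul_assoc, hFv, mul_zero]
  have t22 : E * M * F * (F * M' * E) = E := by
    have h4 : M * F * M' = 1 - vecMulVec u (z ᵥ* M') := by
      rw [hF, mul_sub, mul_one, sub_mul, hMM', mul_vmv, hMw, vmv_mul]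
    have h5 : E * (1 - vecMulVec u (z ᵥ* M')) = E := by
      rw [mul_sub, mul_one, hEu, sub_zero]
    have a1 : E * M * F * (F * M' * E) = E * M * (F * F) * (M' * E) := by
      noncomm_ring
    have a2 : E * M * F * (M' * E) = E * (M * F * M') * E := by
      noncomm_ring
    rw [a1, hFF, a2, h4, h5, hEE]
  rw [mul_add, add_mul, add_mul, t11, t12, t21, t22, add_zero, zero_add, hE]
  noncomm_ring

lemma aeval_split (A M P : Matrix (Fin n) (Fin n) ℝ) (s : ℝ)
    (h1 : (1 - P) * M = A * (1 - P)) (h2 : P * M = s • P) (p : ℝ[X]) :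
    aeval M p = aeval A p * (1 - P) + (p.eval s) • P := by
  induction p using Polynomial.induction_on with
  | C a =>
      simp only [aeval_C, eval_C]
      rw [Algebra.algebraMap_eq_smul_one, smul_mul_assoc, one_mul, ← smul_add,
        sub_add_cancel]
  | add p q hp hq =>
      rw [map_add, map_add, hp, hq, eval_add, add_mul, add_smul]
      abel
  | monomial k a ih =>
      rw [pow_succ, ← mul_assoc,
        show (aeval M) (C a * X ^ k * X) = (aeval M) (C a * X ^ k) * M by
          rw [_root_.map_mul, aeval_X],
        show (aeval A) (C a * X ^ k * X) = (aeval A) (C a * X ^ k) * A by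
          rw [_root_.map_mul, aeval_X],
        show eval s (C a * X ^ k * X) = eval s (C a * X ^ k) * s by
          rw [eval_mul, eval_X],
        ih, add_mul, mul_assoc, h1, smul_mul_assoc, h2, ← mul_assoc, smul_smul]


lemma vmv_mulVec (a b x : Fin n → ℝ) : vecMulVec a b *ᵥ x = (b ⬝ᵥ x) • a := by
  ext i
  simp only [mulVec, vecMulVec_apply, dotProduct, Pi.smul_apply, smul_eq_mul, Finset.sum_mul]
  exact Finset.sum_congr rfl fun k _ => by ring

def conjHom (Cq Cq' : Matrix (Fin n) (Fin n) ℝ) (h1 : Cq * Cq' = 1) (h2 : Cq' * Cq = 1) :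
    Matrix (Fin n) (Fin n) ℝ →ₐ[ℝ] Matrix (Fin n) (Fin n) ℝ where
  toFun X := Cq' * X * Cq
  map_one' := by
    show Cq' * 1 * Cq = 1
    rw [mul_one, h2]
  map_mul' X Y := by
    show Cq' * (X * Y) * Cq = (Cq' * X * Cq) * (Cq' * Y * Cq)
    have e1 : (Cq' * X * Cq) * (Cq' * Y * Cq) = Cq' * (X * ((Cq * Cq') * Y)) * Cq := by
      noncomm_ring
    rw [e1, h1, one_mul]
  map_zero' := by
    show Cq' * 0 * Cq = 0
    rw [mul_zero, zero_mul]
  map_add' X Y := by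
    show Cq' * (X + Y) * Cq = Cq' * X * Cq + Cq' * Y * Cq
    noncomm_ring
  commutes' r := by
    show Cq' * (algebraMap ℝ _ r) * Cq = algebraMap ℝ _ r
    simp only [Algebra.algebraMap_eq_smul_one]
    rw [mul_smul_comm, mul_one, smul_mul_assoc, h2]

lemma eval_charpoly' (A : Matrix (Fin n) (Fin n) ℝ) (t : ℝ) :
    (Matrix.charpoly A).eval t = ((t • (1 : Matrix (Fin n) (Fin n) ℝ)) - A).det := by
  rw [Matrix.charpoly]
  rw [show (Matrix.charmatrix A).det.eval t
      = (Polynomial.evalRingHom t) (Matrix.charmatrix A).det from rfl]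
  rw [RingHom.map_det]
  congr 1
  ext i j
  by_cases h : i = j
  · subst h
    simp [Matrix.charmatrix_apply_eq, Matrix.one_apply_eq]
  · simp [Matrix.charmatrix_apply_ne _ _ _ h, Matrix.one_apply_ne h]

lemma spectral (A : Matrix (Fin n) (Fin n) ℝ) (lam : ℝ)
    (hm : (Matrix.charpoly A).rootMultiplicity lam = 1) :
    ∃ g : ℝ[X], g.eval lam ≠ 0 ∧ (X - C lam) * g = Matrix.charpoly A ∧
      ((g.eval lam)⁻¹ • aeval A g) ≠ 0 ∧
      A * ((g.eval lam)⁻¹ • aeval A g) = lam • ((g.eval lam)⁻¹ • aeval A g) ∧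
      ((g.eval lam)⁻¹ • aeval A g) * A = lam • ((g.eval lam)⁻¹ • aeval A g) ∧
      ((g.eval lam)⁻¹ • aeval A g) * ((g.eval lam)⁻¹ • aeval A g)
        = ((g.eval lam)⁻¹ • aeval A g) ∧
      aeval A g * (1 - ((g.eval lam)⁻¹ • aeval A g)) = 0 := by
  set p := Matrix.charpoly A with hp
  have hp0 : p ≠ 0 := (Matrix.charpoly_monic A).ne_zero
  have key1 := p.pow_mul_divByMonic_rootMultiplicity_eq lam
  have key2 := Polynomial.eval_divByMonic_pow_rootMultiplicity_ne_zero lam hp0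
  rw [hm, pow_one] at key1 key2
  set g := p /ₘ (X - C lam) with hg
  set c := (g.eval lam)⁻¹ with hc
  have hc0 : c ≠ 0 := inv_ne_zero key2
  obtain ⟨q, hq⟩ : (X - C lam) ∣ (g - C (g.eval lam)) := X_sub_C_dvd_sub_C_eval
  set P := c • aeval A g with hP
  have hchar : aeval A p = 0 := A.aeval_self_charpoly
  have hAg : A * aeval A g = lam • aeval A g := by
    have h1 : (X : ℝ[X]) * g = p + C lam * g := by linear_combination key1
    calc A * aeval A g = aeval A (X * g) := by rw [_root_.map_mul, aeval_X]
      _ = aeval A p + aeval A (C lam * g) := by rw [h1, map_add]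
      _ = lam • aeval A g := by
          rw [hchar, zero_add, _root_.map_mul, aeval_C, Algebra.algebraMap_eq_smul_one,
            smul_mul_assoc, one_mul]
  have hgg : aeval A g * aeval A g = (g.eval lam) • aeval A g := by
    have h1 : g * g = q * p + C (g.eval lam) * g := by linear_combination g * hq + q * key1
    calc aeval A g * aeval A g = aeval A (g * g) := (_root_.map_mul _ _ _).symm
      _ = aeval A q * aeval A p + (g.eval lam) • aeval A g := by
          rw [h1, map_add, _root_.map_mul, _root_.map_mul, aeval_C,
            Algebra.algebraMap_eq_smul_one, smul_mul_assoc, one_mul]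
      _ = (g.eval lam) • aeval A g := by rw [hchar, mul_zero, zero_add]
  have hPP : P * P = P := by
    rw [hP, smul_mul_assoc, mul_smul_comm, hgg, smul_smul, smul_smul]
    congr 1
    rw [hc, mul_assoc, inv_mul_cancel₀ key2, mul_one]
  have hAP : A * P = lam • P := by rw [hP, mul_smul_comm, hAg, smul_comm]
  have hgAA : aeval A g * A = A * aeval A g := by
    have h1 : aeval A (g * X) = aeval A (X * g) := by rw [mul_comm]
    rwa [_root_.map_mul, _root_.map_mul, aeval_X] at h1
  have hPA : P * A = lam • P := by
    rw [hP, smul_mul_assoc, hgAA, ← mul_smul_comm, ← hP, hAP]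
  have hgP : aeval A g * (1 - P) = 0 := by
    rw [mul_sub, mul_one, hP, mul_smul_comm, hgg, smul_smul, hc,
      inv_mul_cancel₀ key2, one_smul, sub_self]
  have hgA0 : aeval A g ≠ 0 := by
    intro h0
    have hgq : aeval A g = (A - lam • 1) * aeval A q + (g.eval lam) • 1 := by
      have h1 : g = (X - C lam) * q + C (g.eval lam) := by linear_combination hq
      conv_lhs => rw [h1]
      rw [map_add, _root_.map_mul, map_sub, aeval_X, aeval_C, aeval_C,
        Algebra.algebraMap_eq_smul_one, Algebra.algebraMap_eq_smul_one]
    have heq : (A - lam • 1) * aeval A q = -((g.eval lam) • 1) := by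
      rw [h0] at hgq
      exact eq_neg_of_add_eq_zero_left hgq.symm
    have hunit : (A - lam • 1) * ((-c) • aeval A q) = 1 := by
      rw [mul_smul_comm, heq, smul_neg, neg_smul, neg_neg, smul_smul, hc,
        inv_mul_cancel₀ key2, one_smul]
    have hdet : (A - lam • 1).det ≠ 0 := by
      intro hd
      have h2 := congrArg Matrix.det hunit
      rw [det_mul, hd, zero_mul, det_one] at h2
      norm_num at h2
    apply hdet
    have hev0 : p.eval lam = 0 := by rw [← key1]; simp
    have h3 : ((lam • (1 : Matrix (Fin n) (Fin n) ℝ)) - A).det = 0 := by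
      rw [← eval_charpoly']; exact hev0
    have hneg : A - lam • (1 : Matrix (Fin n) (Fin n) ℝ)
        = -((lam • (1 : Matrix (Fin n) (Fin n) ℝ)) - A) := by rw [neg_sub]
    rw [hneg, det_neg, h3, mul_zero]
  have hPne : P ≠ 0 := by rw [hP]; exact smul_ne_zero hc0 hgA0
  exact ⟨g, key2, key1, hPne, hAP, hPA, hPP, hgP⟩

lemma ker_le_one (A : Matrix (Fin n) (Fin n) ℝ) (lam : ℝ) (g : ℝ[X])
    (key2 : g.eval lam ≠ 0) (key1 : (X - C lam) * g = Matrix.charpoly A) :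
    Module.finrank ℝ (LinearMap.ker (A - lam • 1).mulVecLin) ≤ 1 := by
  have hshift : (A - lam • (1 : Matrix (Fin n) (Fin n) ℝ)).charpoly
      = aeval (X + C lam) (Matrix.charpoly A) := by
    rw [Matrix.charpoly, Matrix.charpoly]
    rw [show (aeval (X + C lam)) (Matrix.charmatrix A).det
        = ((aeval (X + C lam) : ℝ[X] →ₐ[ℝ] ℝ[X]) : ℝ[X] →+* ℝ[X])
            (Matrix.charmatrix A).det from rfl]
    rw [RingHom.map_det]
    congr 1
    refine Matrix.ext fun i j => ?_
    rw [RingHom.mapMatrix_apply, Matrix.map_apply]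
    by_cases h : i = j
    · subst h
      rw [Matrix.charmatrix_apply_eq, Matrix.charmatrix_apply_eq]
      simp only [RingHom.coe_coe, map_sub, aeval_X, aeval_C, Matrix.sub_apply,
        Matrix.smul_apply, Matrix.one_apply_eq, smul_eq_mul, mul_one, Polynomial.algebraMap_eq]
      ring
    · rw [Matrix.charmatrix_apply_ne _ _ _ h, Matrix.charmatrix_apply_ne _ _ _ h]
      simp only [RingHom.coe_coe, map_neg, aeval_C, Matrix.sub_apply, Matrix.smul_apply,
        Matrix.one_apply_ne h, smul_eq_mul, mul_zero, sub_zero, Polynomial.algebraMap_eq]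
  have hcomp : aeval (X + C lam) (Matrix.charpoly A) = X * (aeval (X + C lam) g) := by
    rw [← key1, _root_.map_mul, map_sub, aeval_X, aeval_C, Polynomial.algebraMap_eq,
      add_sub_cancel_right]
  have hgc0 : (aeval (X + C lam) g).coeff 0 ≠ 0 := by
    rw [coeff_zero_eq_eval_zero, ← comp_eq_aeval, eval_comp]
    simpa using key2
  have hgcne : aeval (X + C lam) g ≠ 0 := by
    intro h0; rw [h0] at hgc0; simp at hgc0
  have h00 : (aeval (X + C lam) g).natTrailingDegree = 0 :=
    natTrailingDegree_eq_zero_of_constantCoeff_ne_zero (by rwa [constantCoeff_apply])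
  have hnt : ((A - lam • (1 : Matrix (Fin n) (Fin n) ℝ)).charpoly).natTrailingDegree = 1 := by
    rw [hshift, hcomp, natTrailingDegree_mul X_ne_zero hgcne, natTrailingDegree_X, h00]
  set φ : Module.End ℝ (Fin n → ℝ) := (A - lam • 1).mulVecLin with hφ
  have hφc : LinearMap.charpoly φ = (A - lam • 1).charpoly := by
    rw [← LinearMap.charpoly_toMatrix φ (Pi.basisFun ℝ (Fin n)), LinearMap.toMatrix_eq_toMatrix']
    congr 1
    rw [hφ, ← Matrix.toLin'_apply', LinearMap.toMatrix'_toLin']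
  have hle : LinearMap.ker φ ≤ Module.End.maxGenEigenspace φ 0 := by
    intro x hx
    rw [Module.End.mem_maxGenEigenspace]
    exact ⟨1, by simpa using hx⟩
  calc Module.finrank ℝ (LinearMap.ker φ)
      ≤ Module.finrank ℝ (Module.End.maxGenEigenspace φ 0) := Submodule.finrank_mono hle
    _ = (LinearMap.charpoly φ).natTrailingDegree := LinearMap.finrank_maxGenEigenspace_zero_eq φ
    _ = 1 := by rw [hφc, hnt]

end Stmt6Aux

/-- If `A ∈ Mₙ(ℝ)` has a simple real eigenvalue, then the unital algebra `⟨A⟩` is,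
up to similarity, generated by a single entrywise strictly positive matrix. -/
theorem stmt6 (n : ℕ) (A : Matrix (Fin n) (Fin n) ℝ)
    (hev : ∃ lam : ℝ, (Matrix.charpoly A).rootMultiplicity lam = 1) :
    ∃ C : Matrix (Fin n) (Fin n) ℝ, IsUnit C.det ∧
      ∃ B : Matrix (Fin n) (Fin n) ℝ, (∀ i j, 0 < B i j) ∧
        Algebra.adjoin ℝ {B} = Algebra.adjoin ℝ {C⁻¹ * A * C} := by
  classical
  obtain ⟨lam, hm⟩ := hev
  rcases Nat.eq_zero_or_pos n with hn0 | hnpos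
  · subst hn0
    refine ⟨1, by simp, A, fun i => i.elim0, ?_⟩
    have h00 : (1 : Matrix (Fin 0) (Fin 0) ℝ)⁻¹ * A * 1 = A := by
      ext i j; exact i.elim0
    rw [h00]
  -- main case
  obtain ⟨g, key2, key1, hPne, hAP, hPA, hPP, hgP⟩ := Stmt6Aux.spectral A lam hm
  set P := (g.eval lam)⁻¹ • aeval A g with hPdef
  have hker := Stmt6Aux.ker_le_one A lam g key2 key1
  -- find a nonzero entry of P
  have hP0 : ∃ i j, P i j ≠ 0 := by
    by_contra h
    push_neg at h
    exact hPne (Matrix.ext fun i j => h i j)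
  obtain ⟨i1, j0, hij⟩ := hP0
  set u : Fin n → ℝ := fun i => P i j0 with hu
  have hu0 : u ≠ 0 := by
    intro h
    exact hij (congrFun h i1)
  -- columns of P lie in the kernel of A - lam•1
  have h0AP : (A - lam • 1) * P = 0 := by
    rw [sub_mul, smul_mul_assoc, one_mul, hAP, sub_self]
  have hcolmem : ∀ j, (fun i => P i j) ∈ LinearMap.ker (A - lam • 1).mulVecLin := by
    intro j
    rw [LinearMap.mem_ker, Matrix.mulVecLin_apply]
    have hcol : (fun i => P i j) = P *ᵥ Pi.single j 1 := by
      rw [Matrix.mulVec_single]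
      simp
      rfl
    rw [hcol, Matrix.mulVec_mulVec, h0AP, Matrix.zero_mulVec]
  have hspan : Submodule.span ℝ {u} = LinearMap.ker (A - lam • 1).mulVecLin := by
    apply Submodule.eq_of_le_of_finrank_le
    · rw [Submodule.span_singleton_le_iff_mem]
      exact hcolmem j0
    · rw [finrank_span_singleton hu0]
      exact hker
  have hcols : ∀ j, ∃ a : ℝ, (fun i => P i j) = a • u := by
    intro j
    have h1 := hcolmem j
    rw [← hspan, Submodule.mem_span_singleton] at h1
    obtain ⟨a, ha⟩ := h1
    exact ⟨a, ha.symm⟩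
  choose vv hvv using hcols
  have hPuv : P = vecMulVec u vv := by
    ext i j
    have h1 := congrFun (hvv j) i
    simp only [Pi.smul_apply, smul_eq_mul] at h1
    rw [Matrix.vecMulVec_apply, h1, mul_comm]
  have hvu : vv ⬝ᵥ u = 1 := by
    have h2 : (vv ⬝ᵥ u) • P = P := by
      conv_lhs => rw [hPuv, ← Stmt6Aux.vmv_mul_vmv u vv u vv]
      rw [← hPuv, hPP]
    have h3 : ((vv ⬝ᵥ u) • P) i1 j0 = P i1 j0 := by rw [h2]
    rw [Matrix.smul_apply, smul_eq_mul] at h3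
    have h4 : (vv ⬝ᵥ u) * P i1 j0 = 1 * P i1 j0 := by rw [one_mul]; exact h3
    exact mul_right_cancel₀ hij h4
  -- the positive rank one target
  set w : Fin n → ℝ := fun _ => 1 with hw
  set z : Fin n → ℝ := fun _ => (n : ℝ)⁻¹ with hz
  have hnR : (0:ℝ) < n := by exact_mod_cast hnpos
  have hzw : z ⬝ᵥ w = 1 := by
    simp only [dotProduct, hz, hw, mul_one, Finset.sum_const, Finset.card_univ,
      Fintype.card_fin, nsmul_eq_mul]
    exact mul_inv_cancel₀ hnR.ne'
  -- invertible M with M *ᵥ w = u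
  obtain ⟨i0, hi0⟩ : ∃ i, u i ≠ 0 := Function.ne_iff.mp hu0
  set MM : Matrix (Fin n) (Fin n) ℝ := 1 + vecMulVec (u - w) (Pi.single i0 1) with hMM
  have hMMw : MM *ᵥ w = u := by
    rw [hMM, Matrix.add_mulVec, Matrix.one_mulVec, Stmt6Aux.vmv_mulVec]
    have h5 : (Pi.single i0 1 : Fin n → ℝ) ⬝ᵥ w = 1 := by
      rw [single_dotProduct, hw, one_mul]
    rw [h5, one_smul, add_sub_cancel]
  have hdet : MM.det = u i0 := by
    rw [hMM, Matrix.vecMulVec_eq (Fin 1), Matrix.det_one_add_replicateCol_mul_replicateRow]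
    rw [single_dotProduct]
    simp [hw]
  have hMMunit : IsUnit MM.det := by
    rw [hdet]; exact isUnit_iff_ne_zero.mpr hi0
  have hMM1 : MM * MM⁻¹ = 1 := Matrix.mul_nonsing_inv _ hMMunit
  have hMM2 : MM⁻¹ * MM = 1 := Matrix.nonsing_inv_mul _ hMMunit
  have hMM'u : MM⁻¹ *ᵥ u = w := by
    rw [← hMMw, Matrix.mulVec_mulVec, hMM2, Matrix.one_mulVec]
  -- the similarity
  set Cm : Matrix (Fin n) (Fin n) ℝ :=
    vecMulVec u z + (1 - vecMulVec u vv) * MM * (1 - vecMulVec w z) with hCm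
  set Cm' : Matrix (Fin n) (Fin n) ℝ :=
    vecMulVec w vv + (1 - vecMulVec w z) * MM⁻¹ * (1 - vecMulVec u vv) with hCm'
  have hCC' : Cm * Cm' = 1 := Stmt6Aux.conj_inv u vv w z MM MM⁻¹ hvu hzw hMMw hMM1
  have hC'C : Cm' * Cm = 1 := Stmt6Aux.conj_inv w z u vv MM⁻¹ MM hzw hvu hMM'u hMM2
  -- conjugated projection
  have hPC : P * Cm = vecMulVec u z := by
    have h5 : vecMulVec u vv * (1 - vecMulVec u vv) = 0 := by
      rw [mul_sub, mul_one, Stmt6Aux.vmv_mul_vmv, hvu, one_smul, sub_self]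
    rw [hPuv, hCm, mul_add, Stmt6Aux.vmv_mul_vmv, hvu, one_smul,
      ← mul_assoc, ← mul_assoc, h5, zero_mul, zero_mul, add_zero]
  have hQ : Cm' * (P * Cm) = vecMulVec w z := by
    have h6 : (1 - vecMulVec u vv) * vecMulVec u z = 0 := by
      rw [sub_mul, one_mul, Stmt6Aux.vmv_mul_vmv, hvu, one_smul, sub_self]
    rw [hPC, hCm', add_mul, Stmt6Aux.vmv_mul_vmv, hvu, one_smul,
      mul_assoc, h6, mul_zero, add_zero]
  clear_value Cm Cm'
  -- choose t
  set b : ℝ := ∑ i, ∑ j, |(Cm' * A * Cm) i j| with hb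
  have hb0 : 0 ≤ b := Finset.sum_nonneg fun _ _ => Finset.sum_nonneg fun _ _ => abs_nonneg _
  have hbd : ∀ i j, -b ≤ (Cm' * A * Cm) i j := by
    intro i j
    have h1 : |(Cm' * A * Cm) i j| ≤ b := by
      rw [hb]
      calc |(Cm' * A * Cm) i j| ≤ ∑ j', |(Cm' * A * Cm) i j'| :=
            Finset.single_le_sum (f := fun j' => |(Cm' * A * Cm) i j'|)
              (fun _ _ => abs_nonneg _) (Finset.mem_univ j)
        _ ≤ ∑ i', ∑ j', |(Cm' * A * Cm) i' j'| :=
            Finset.single_le_sum (f := fun i' => ∑ j', |(Cm' * A * Cm) i' j'|)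
              (fun _ _ => Finset.sum_nonneg fun _ _ => abs_nonneg _) (Finset.mem_univ i)
    linarith [neg_abs_le ((Cm' * A * Cm) i j)]
  have hgne : g ≠ 0 := fun h => key2 (by rw [h]; simp)
  have hfin : {x : ℝ | g.IsRoot x}.Finite := Polynomial.finite_setOf_isRoot hgne
  have hfin2 : {t : ℝ | g.eval (lam + t) = 0}.Finite := by
    have hinj : Function.Injective (fun t : ℝ => lam + t) := fun a b h => by simpa using h
    exact Set.Finite.preimage hinj.injOn hfin
  obtain ⟨t, htI, htr⟩ := ((Set.Ioi_infinite ((n:ℝ) * b)).diff hfin2).nonempty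
  have htIoi : (n:ℝ) * b < t := htI
  have htg : g.eval (lam + t) ≠ 0 := by simpa using htr
  -- the algebra generated by Mt = A + t•P equals that generated by A
  set Mt : Matrix (Fin n) (Fin n) ℝ := A + t • P with hMt
  have hMtmem : Mt ∈ Algebra.adjoin ℝ {A} := by
    apply Subalgebra.add_mem _ (Algebra.self_mem_adjoin_singleton ℝ A)
    apply Subalgebra.smul_mem
    rw [hPdef]
    exact Subalgebra.smul_mem _ (Polynomial.aeval_mem_adjoin_singleton ℝ A) _
  have hPMt : P * Mt = (lam + t) • P := by
    rw [hMt, mul_add, hPA, mul_smul_comm, hPP, add_smul]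
  have hsplith1 : (1 - P) * Mt = A * (1 - P) := by
    rw [sub_mul, one_mul, hPMt, mul_sub, mul_one, hAP, hMt, add_smul]
    abel
  have hsplit := Stmt6Aux.aeval_split A Mt P (lam + t) hsplith1 hPMt g
  have haevalg : aeval Mt g = (g.eval (lam + t)) • P := by
    rw [hsplit, hgP, zero_add]
  have hPmemMt : P ∈ Algebra.adjoin ℝ {Mt} := by
    have h7 : P = (g.eval (lam + t))⁻¹ • aeval Mt g := by
      rw [haevalg, smul_smul, inv_mul_cancel₀ htg, one_smul]
    rw [h7]
    exact Subalgebra.smul_mem _ (Polynomial.aeval_mem_adjoin_singleton ℝ Mt) _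
  have hAmem : A ∈ Algebra.adjoin ℝ {Mt} := by
    have h7 : A = Mt - t • P := by rw [hMt, add_sub_cancel_right]
    rw [h7]
    exact Subalgebra.sub_mem _ (Algebra.self_mem_adjoin_singleton ℝ Mt)
      (Subalgebra.smul_mem _ hPmemMt t)
  have hadj : Algebra.adjoin ℝ {Mt} = Algebra.adjoin ℝ {A} :=
    le_antisymm (Algebra.adjoin_le (Set.singleton_subset_iff.mpr hMtmem))
      (Algebra.adjoin_le (Set.singleton_subset_iff.mpr hAmem))
  -- transport through conjugation
  set φ := Stmt6Aux.conjHom Cm Cm' hCC' hC'C with hφ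
  have hmapped := congrArg (Subalgebra.map φ) hadj
  rw [AlgHom.map_adjoin, AlgHom.map_adjoin, Set.image_singleton, Set.image_singleton] at hmapped
  have hφMt : φ Mt = Cm' * A * Cm + t • vecMulVec w z := by
    show Cm' * Mt * Cm = _
    rw [hMt, mul_add, add_mul, mul_smul_comm, smul_mul_assoc, mul_assoc Cm' P Cm, hQ]
  have hφA : φ A = Cm' * A * Cm := rfl
  refine ⟨Cm, Matrix.isUnit_det_of_right_inverse hCC', ?_⟩
  rw [Matrix.inv_eq_right_inv hCC']
  refine ⟨Cm' * A * Cm + t • vecMulVec w z, ?_, ?_⟩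
  · intro i j
    have hentry : (Cm' * A * Cm + t • vecMulVec w z) i j
        = (Cm' * A * Cm) i j + t * (n : ℝ)⁻¹ := by
      rw [Matrix.add_apply, Matrix.smul_apply, Matrix.vecMulVec_apply, hw, hz]
      simp
    rw [hentry]
    have h9 : b < t * (n:ℝ)⁻¹ := by
      rw [← div_eq_mul_inv, lt_div_iff₀ hnR, mul_comm]
      exact htIoi
    have h10 := hbd i j
    linarith
  · rw [hφMt, hφA] at hmapped
    exact hmapped
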